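/- Let k ≥ 2 and 0 < β < 1, and let ν = ν^{k,β} be as defined. Then the rank sequence of ν is ultra-log-concave (equivalently, k² r_k² ≥ (k+1)² r_{k−1} r_{k+1}) if and only if (k+1)β² − 2kβ + (k−1) ≤ 0, i.e. if and only if β ≥ 1 − 2/(k+1). -/

import Mathlib

open Finset

/-- The number of coordinates of `η` equal to `true`. -/
def lvl {m : ℕ} (η : Fin m → Bool) : ℕ := (univ.filter fun i => η i = true).card

/-- Unnormalized weight of the measure `ν^{k,β}` on `{0,1}^{2k}`. -/
def nuWt (k : ℕ) (β : ℝ) (η : Fin (2 * k) → Bool) : ℝ :=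
  if h : 0 < 2 * k then
    if lvl η = k - 1 ∧ η ⟨0, h⟩ = true then 1
    else if lvl η = k - 1 then β ^ 2
    else if lvl η = k then β
    else if lvl η = k + 1 ∧ η ⟨0, h⟩ = true then β ^ 2
    else if lvl η = k + 1 then 1
    else 0
  else 0

/-- Rank sequence of `ν^{k,β}` (a probability measure, so we normalize). -/
noncomputable def nuRank (k : ℕ) (β : ℝ) (i : ℕ) : ℝ :=
  (∑ η : Fin (2 * k) → Bool, if lvl η = i then nuWt k β η else 0) /
    (∑ η : Fin (2 * k) → Bool, nuWt k β η)

section Aux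

def boolEquiv (n : ℕ) : (Fin n → Bool) ≃ Finset (Fin n) where
  toFun η := univ.filter fun i => η i = true
  invFun s := fun i => decide (i ∈ s)
  left_inv η := by funext i; simp
  right_inv s := by ext i; simp

lemma lvl_decide (n : ℕ) (s : Finset (Fin n)) : lvl (fun i => decide (i ∈ s)) = s.card := by
  unfold lvl; congr 1; ext i; simp

lemma sum_fun_eq (n : ℕ) (F : (Fin n → Bool) → ℝ) :
    ∑ η : Fin n → Bool, F η = ∑ s : Finset (Fin n), F (fun i => decide (i ∈ s)) :=
  (Equiv.sum_comp (boolEquiv n).symm F).symm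

lemma card_without (n j : ℕ) (a : Fin n) :
    (univ.filter fun s : Finset (Fin n) => s.card = j ∧ a ∉ s).card = (n - 1).choose j := by
  have h : (univ.filter fun s : Finset (Fin n) => s.card = j ∧ a ∉ s)
      = (univ.erase a).powersetCard j := by
    ext s
    simp [Finset.mem_powersetCard, Finset.subset_erase, and_comm]
  rw [h, Finset.card_powersetCard, Finset.card_erase_of_mem (mem_univ a), Finset.card_univ,
    Fintype.card_fin]

lemma card_all (n j : ℕ) :
    (univ.filter fun s : Finset (Fin n) => s.card = j).card = n.choose j := by
  have h : (univ.filter fun s : Finset (Fin n) => s.card = j)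
      = (univ : Finset (Fin n)).powersetCard j := by
    ext s; simp [Finset.mem_powersetCard]
  rw [h, Finset.card_powersetCard, Finset.card_univ, Fintype.card_fin]

lemma card_with (n j : ℕ) (hj : 1 ≤ j) (a : Fin n) :
    (univ.filter fun s : Finset (Fin n) => s.card = j ∧ a ∈ s).card = (n - 1).choose (j - 1) := by
  have key := Finset.card_filter_add_card_filter_not
    (s := univ.filter fun s : Finset (Fin n) => s.card = j) (p := fun s => a ∈ s)
  rw [Finset.filter_filter, Finset.filter_filter, card_all] at key
  have hw := card_without n j a
  have hn : 1 ≤ n := Nat.one_le_iff_ne_zero.mpr (by rintro rfl; exact a.elim0)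
  obtain ⟨m, rfl⟩ := Nat.exists_eq_add_of_le hj
  obtain ⟨l, rfl⟩ := Nat.exists_eq_add_of_le hn
  have pascal : (1 + l).choose (1 + m) = l.choose m + l.choose (1 + m) := by
    rw [Nat.add_comm 1 l, Nat.add_comm 1 m]; exact Nat.choose_succ_succ l m
  simp only [Nat.add_sub_cancel_left] at *
  omega

lemma sum_ite_count (n : ℕ) (P : Finset (Fin n) → Prop) [DecidablePred P] (c : ℝ) :
    ∑ s : Finset (Fin n), (if P s then c else 0) = ((univ.filter P).card : ℝ) * c := by
  rw [← Finset.sum_filter, Finset.sum_const, nsmul_eq_mul]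

lemma wt_eval (k : ℕ) (β : ℝ) (h : 0 < 2 * k) (s : Finset (Fin (2 * k))) :
    nuWt k β (fun i => decide (i ∈ s)) =
      if s.card = k - 1 then (if (⟨0, h⟩ : Fin (2 * k)) ∈ s then 1 else β ^ 2)
      else if s.card = k then β
      else if s.card = k + 1 then (if (⟨0, h⟩ : Fin (2 * k)) ∈ s then β ^ 2 else 1)
      else 0 := by
  unfold nuWt
  rw [dif_pos h, lvl_decide]
  simp only [decide_eq_true_eq]
  split_ifs <;> first | rfl | omega | tauto

lemma quad_iff (k : ℕ) (hk : 2 ≤ k) (β : ℝ) (hβ0 : 0 < β) (hβ1 : β < 1) :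
    (((k : ℝ) + 1) * β ^ 2 - 2 * (k : ℝ) * β + ((k : ℝ) - 1) ≤ 0 ↔
      1 - 2 / ((k : ℝ) + 1) ≤ β) := by
  have hkR : (2 : ℝ) ≤ (k : ℝ) := by exact_mod_cast hk
  have hk1 : (0 : ℝ) < (k : ℝ) + 1 := by linarith
  have e : 1 - 2 / ((k : ℝ) + 1) = ((k : ℝ) - 1) / ((k : ℝ) + 1) := by
    field_simp
    ring
  rw [e, div_le_iff₀ hk1]
  constructor
  · intro hle
    nlinarith
  · intro hle
    nlinarith
end Aux

theorem stmt_6 (k : ℕ) (hk : 2 ≤ k) (β : ℝ) (hβ0 : 0 < β) (hβ1 : β < 1) :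
    ((k : ℝ) ^ 2 * (nuRank k β k) ^ 2 ≥
        ((k : ℝ) + 1) ^ 2 * nuRank k β (k - 1) * nuRank k β (k + 1) ↔
      ((k : ℝ) + 1) * β ^ 2 - 2 * (k : ℝ) * β + ((k : ℝ) - 1) ≤ 0) ∧
    ((k : ℝ) ^ 2 * (nuRank k β k) ^ 2 ≥
        ((k : ℝ) + 1) ^ 2 * nuRank k β (k - 1) * nuRank k β (k + 1) ↔
      1 - 2 / ((k : ℝ) + 1) ≤ β) := by
  have h : 0 < 2 * k := by omega
  set a : Fin (2 * k) := ⟨0, h⟩ with ha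
  -- numerators as sums over finsets
  have hnum : ∀ j : ℕ, (∑ η : Fin (2 * k) → Bool, if lvl η = j then nuWt k β η else 0)
      = ∑ s : Finset (Fin (2 * k)), (if s.card = j then
          (if s.card = k - 1 then (if a ∈ s then (1:ℝ) else β ^ 2)
           else if s.card = k then β
           else if s.card = k + 1 then (if a ∈ s then β ^ 2 else 1)
           else 0) else 0) := by
    intro j
    rw [sum_fun_eq (2 * k) (fun η => if lvl η = j then nuWt k β η else 0)]
    refine Finset.sum_congr rfl fun s _ => ?_
    rw [lvl_decide, wt_eval k β h s]
  -- the natural number quantities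
  set A : ℝ := ((2 * k - 1).choose (k + 1) : ℝ) with hA
  set B : ℝ := ((2 * k - 1).choose k : ℝ) with hB
  have hApos : 0 ≤ A := by positivity
  have hBpos : 0 < B := by
    have := Nat.choose_pos (n := 2 * k - 1) (k := k) (by omega)
    rw [hB]; exact_mod_cast this
  -- choose identities
  have i1 : ((2 * k - 1).choose (k - 1 - 1) : ℝ) = A := by
    have e : k - 1 - 1 = (2 * k - 1) - (k + 1) := by omega
    rw [e, Nat.choose_symm (by omega)]
  have i2 : ((2 * k - 1).choose (k - 1) : ℝ) = B := by
    have e : k - 1 = (2 * k - 1) - k := by omega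
    rw [e, Nat.choose_symm (by omega)]
  have i3nat : (2 * k).choose k = (2 * k - 1).choose (k - 1) + (2 * k - 1).choose k := by
    obtain ⟨m, rfl⟩ : ∃ m, k = m + 1 := ⟨k - 1, by omega⟩
    have e1 : 2 * (m + 1) - 1 = 2 * m + 1 := by omega
    rw [e1]
    have e2 : 2 * (m + 1) = 2 * m + 1 + 1 := by omega
    rw [e2]
    simp only [Nat.add_sub_cancel]
    exact Nat.choose_succ_succ (2 * m + 1) m
  have i3 : ((2 * k).choose k : ℝ) = 2 * B := by
    rw [i3nat]
    push_cast
    rw [i2]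
    ring
  have i4 : ((k : ℝ) + 1) * A = ((k : ℝ) - 1) * B := by
    have h4 := Nat.choose_succ_right_eq (2 * k - 1) k
    have h5 : 2 * k - 1 - k = k - 1 := by omega
    rw [h5] at h4
    have h6 := congrArg (fun n : ℕ => (n : ℝ)) h4
    push_cast at h6
    rw [Nat.cast_sub (by omega : 1 ≤ k), Nat.cast_one] at h6
    rw [hA, hB]
    linear_combination h6
  -- the three numerators
  have eKm1 : (∑ η : Fin (2 * k) → Bool, if lvl η = k - 1 then nuWt k β η else 0)
      = A + B * β ^ 2 := by
    rw [hnum (k - 1)]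
    have split : ∀ s : Finset (Fin (2 * k)),
        (if s.card = k - 1 then
          (if s.card = k - 1 then (if a ∈ s then (1:ℝ) else β ^ 2)
           else if s.card = k then β
           else if s.card = k + 1 then (if a ∈ s then β ^ 2 else 1)
           else 0) else 0)
        = (if s.card = k - 1 ∧ a ∈ s then (1:ℝ) else 0)
          + (if s.card = k - 1 ∧ a ∉ s then β ^ 2 else 0) := by
      intro s
      by_cases hc : s.card = k - 1 <;> by_cases hm : a ∈ s <;> simp [hc, hm]
    rw [Finset.sum_congr rfl fun s _ => split s, Finset.sum_add_distrib,
      sum_ite_count (2 * k) (fun s => s.card = k - 1 ∧ a ∈ s) 1,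
      sum_ite_count (2 * k) (fun s => s.card = k - 1 ∧ a ∉ s) (β ^ 2),
      card_with (2 * k) (k - 1) (by omega) a, card_without (2 * k) (k - 1) a]
    have e : 2 * k - 1 = 2 * k - 1 := rfl
    rw [i1, i2]
    ring
  have eK : (∑ η : Fin (2 * k) → Bool, if lvl η = k then nuWt k β η else 0)
      = 2 * B * β := by
    rw [hnum k]
    have split : ∀ s : Finset (Fin (2 * k)),
        (if s.card = k then
          (if s.card = k - 1 then (if a ∈ s then (1:ℝ) else β ^ 2)
           else if s.card = k then β
           else if s.card = k + 1 then (if a ∈ s then β ^ 2 else 1)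
           else 0) else 0)
        = (if s.card = k then β else 0) := by
      intro s
      by_cases hc : s.card = k
      · simp [hc, (show ¬ (k = k - 1) by omega)]
      · simp [hc]
    rw [Finset.sum_congr rfl fun s _ => split s,
      sum_ite_count (2 * k) (fun s => s.card = k) β, card_all (2 * k) k, i3]
  have eKp1 : (∑ η : Fin (2 * k) → Bool, if lvl η = k + 1 then nuWt k β η else 0)
      = A + B * β ^ 2 := by
    rw [hnum (k + 1)]
    have split : ∀ s : Finset (Fin (2 * k)),
        (if s.card = k + 1 then
          (if s.card = k - 1 then (if a ∈ s then (1:ℝ) else β ^ 2)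
           else if s.card = k then β
           else if s.card = k + 1 then (if a ∈ s then β ^ 2 else 1)
           else 0) else 0)
        = (if s.card = k + 1 ∧ a ∈ s then β ^ 2 else 0)
          + (if s.card = k + 1 ∧ a ∉ s then (1:ℝ) else 0) := by
      intro s
      by_cases hc : s.card = k + 1 <;> by_cases hm : a ∈ s <;>
        simp [hc, hm, (show ¬ (k + 1 = k - 1) by omega), (show ¬ (k + 1 = k) by omega)]
    rw [Finset.sum_congr rfl fun s _ => split s, Finset.sum_add_distrib,
      sum_ite_count (2 * k) (fun s => s.card = k + 1 ∧ a ∈ s) (β ^ 2),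
      sum_ite_count (2 * k) (fun s => s.card = k + 1 ∧ a ∉ s) 1,
      card_with (2 * k) (k + 1) (by omega) a, card_without (2 * k) (k + 1) a]
    have e : k + 1 - 1 = k := by omega
    rw [e, hA, hB]
    ring
  -- total mass
  have hsplit : ∀ η : Fin (2 * k) → Bool, nuWt k β η =
      (if lvl η = k - 1 then nuWt k β η else 0) + (if lvl η = k then nuWt k β η else 0)
        + (if lvl η = k + 1 then nuWt k β η else 0) := by
    intro η
    by_cases h1 : lvl η = k - 1
    · simp [h1, (show ¬ (k - 1 = k) by omega), (show ¬ (k - 1 = k + 1) by omega)]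
    · by_cases h2 : lvl η = k
      · simp [h1, h2, (show ¬ (k = k + 1) by omega), (show ¬ (k = k - 1) by omega)]
      · by_cases h3 : lvl η = k + 1
        · simp [h1, h2, h3, (show ¬ (k + 1 = k - 1) by omega), (show ¬ (k + 1 = k) by omega)]
        · have hw : nuWt k β η = 0 := by
            unfold nuWt
            rw [dif_pos h]
            simp [h1, h2, h3]
          simp [h1, h2, h3, hw]
  have eZ : (∑ η : Fin (2 * k) → Bool, nuWt k β η)
      = 2 * A + 2 * B * β ^ 2 + 2 * B * β := by
    rw [Finset.sum_congr rfl fun η _ => hsplit η, Finset.sum_add_distrib,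
      Finset.sum_add_distrib, eKm1, eK, eKp1]
    ring
  set Zv : ℝ := 2 * A + 2 * B * β ^ 2 + 2 * B * β with hZv
  have hZpos : 0 < Zv := by
    have h1 : 0 < 2 * B * β := by positivity
    have h2 : 0 ≤ 2 * B * β ^ 2 := by positivity
    rw [hZv]; linarith
  have hR1 : nuRank k β (k - 1) = (A + B * β ^ 2) / Zv := by
    unfold nuRank; rw [eKm1, eZ]
  have hR2 : nuRank k β k = (2 * B * β) / Zv := by
    unfold nuRank; rw [eK, eZ]
  have hR3 : nuRank k β (k + 1) = (A + B * β ^ 2) / Zv := by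
    unfold nuRank; rw [eKp1, eZ]
  have hkR : (2 : ℝ) ≤ (k : ℝ) := by exact_mod_cast hk
  have main : ((k : ℝ) ^ 2 * (nuRank k β k) ^ 2 ≥
        ((k : ℝ) + 1) ^ 2 * nuRank k β (k - 1) * nuRank k β (k + 1)) ↔
      (((k : ℝ) + 1) * β ^ 2 - 2 * (k : ℝ) * β + ((k : ℝ) - 1) ≤ 0) := by
    rw [hR1, hR2, hR3, ge_iff_le]
    have hZ2 : (0 : ℝ) < Zv ^ 2 := by positivity
    have e5 : (k : ℝ) ^ 2 * ((2 * B * β) / Zv) ^ 2 = ((k : ℝ) * (2 * B * β)) ^ 2 / Zv ^ 2 := by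
      rw [div_pow]; ring
    have e6 : ((k : ℝ) + 1) ^ 2 * ((A + B * β ^ 2) / Zv) * ((A + B * β ^ 2) / Zv)
        = (((k : ℝ) + 1) * (A + B * β ^ 2)) ^ 2 / Zv ^ 2 := by
      field_simp
    rw [e5, e6, div_le_div_iff₀ hZ2 hZ2, mul_le_mul_iff_left₀ hZ2,
      pow_le_pow_iff_left₀ (by positivity) (by positivity) (two_ne_zero)]
    have e7 : ((k : ℝ) + 1) * (A + B * β ^ 2) = (((k : ℝ) - 1) + ((k : ℝ) + 1) * β ^ 2) * B := by
      linear_combination i4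
    have e8 : (k : ℝ) * (2 * B * β) = (2 * (k : ℝ) * β) * B := by ring
    rw [e7, e8, mul_le_mul_iff_left₀ hBpos]
    constructor <;> intro h' <;> linarith
  exact ⟨main, main.trans (quad_iff k hk β hβ0 hβ1)⟩
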